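/- For every k ≥ 2 and every tight k-tree T on n ≥ k vertices, there exists a k-graph H on n vertices which does not contain T and satisfies δ_{k−1}(H) ≥ ⌊n/2⌋ − (2^k + k − 1). -/

import Mathlib

open Finset

attribute [local instance] Classical.propDecidable

variable {α : Type*}

/-- The degree of a vertex `v` in a hypergraph `T`: the number of edges containing `v`. -/
def vdeg [DecidableEq α] (T : Finset (Finset α)) (v : α) : ℕ :=
  (T.filter fun e => v ∈ e).card

/-- The vertex set of a hypergraph: the union of its edges. -/
def hverts [DecidableEq α] (T : Finset (Finset α)) : Finset α := T.sup id

/-- The maximum 1-degree of a hypergraph. -/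
def hmaxDeg [DecidableEq α] (T : Finset (Finset α)) : ℕ := (hverts T).sup (vdeg T)

/-- `es` is a valid ordering of the edges of a tight `k`-tree: every edge is a `k`-set, and
every edge except the first contains a vertex `v` not in any previous edge with the rest of
the edge contained in some previous edge. -/
def ValidOrdering [DecidableEq α] (k : ℕ) (es : List (Finset α)) : Prop :=
  (∀ e ∈ es, e.card = k) ∧
  ∀ i, 0 < i → i < es.length →
    ∃ v ∈ es.getD i ∅,
      (∀ j, j < i → v ∉ es.getD j ∅) ∧
      ∃ j, j < i ∧ (es.getD i ∅) \ {v} ⊆ es.getD j ∅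

/-- `T` is a tight `k`-tree: its edges admit a valid ordering. -/
def IsTightTree [DecidableEq α] (k : ℕ) (T : Finset (Finset α)) : Prop :=
  ∃ es : List (Finset α), es ≠ [] ∧ es.Nodup ∧ es.toFinset = T ∧ ValidOrdering k es

/-- `f` belongs to the shadow of the `k`-graph `H`. -/
def InShadow [DecidableEq α] (k : ℕ) (H : Finset (Finset α)) (f : Finset α) : Prop :=
  f.card = k - 1 ∧ ∃ e ∈ H, f ⊆ e

/-- `H` contains (a copy of) `T`. -/
def Contains {β : Type*} [DecidableEq α] [DecidableEq β]
    (H : Finset (Finset α)) (T : Finset (Finset β)) : Prop :=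
  ∃ φ : β → α, Function.Injective φ ∧ ∀ e ∈ T, e.image φ ∈ H

lemma getD_mem' {β : Type*} (l : List β) (d : β) {i : ℕ} (h : i < l.length) :
    l.getD i d ∈ l := by
  rw [List.getD_eq_getElem l d h]; exact l.getElem_mem h

lemma card_inter_erase [DecidableEq α] (e A : Finset α) (v : α) (hv : v ∈ e) :
    (e ∩ A).card = ((e.erase v) ∩ A).card + if v ∈ A then 1 else 0 := by
  conv_lhs => rw [← Finset.insert_erase hv]
  by_cases h : v ∈ A
  · rw [Finset.insert_inter_of_mem h, Finset.card_insert_of_notMem (by simp), if_pos h]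
  · rw [Finset.insert_inter_of_notMem h, if_neg h, Nat.add_zero]

lemma iff_of_odd_add {c : ℕ} {p q : Prop} [Decidable p] [Decidable q]
    (h1 : Odd (c + if p then 1 else 0)) (h2 : Odd (c + if q then 1 else 0)) : p ↔ q := by
  by_cases hp : p <;> by_cases hq : q <;>
    simp only [hp, hq, if_true, if_false, iff_true, iff_false, Nat.odd_iff] at * <;> omega

/-- Key lemma: for a spanning valid ordering, a set `A` with all edge-intersections odd is
determined by its trace on the first edge. -/
lemma trace_determines {n k : ℕ} (es : List (Finset (Fin n)))
    (hvo : ValidOrdering k es) (hk : 1 ≤ k)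
    (hspan : ∀ v : Fin n, ∃ i, i < es.length ∧ v ∈ es.getD i ∅)
    (A B : Finset (Fin n))
    (hA : ∀ i, i < es.length → Odd ((es.getD i ∅ ∩ A).card))
    (hB : ∀ i, i < es.length → Odd ((es.getD i ∅ ∩ B).card))
    (h0 : es.getD 0 ∅ ∩ A = es.getD 0 ∅ ∩ B) : A = B := by
  have key : ∀ i, ∀ v : Fin n, Nat.find (hspan v) = i → (v ∈ A ↔ v ∈ B) := by
    intro i
    induction i using Nat.strong_induction_on with
    | _ i ih =>
      intro v hfv
      have hspec := Nat.find_spec (hspan v)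
      rw [hfv] at hspec
      obtain ⟨hil, hvi⟩ := hspec
      rcases Nat.eq_zero_or_pos i with hi0 | hipos
      · subst hi0
        constructor
        · intro hvA
          have h' : v ∈ es.getD 0 ∅ ∩ B := h0 ▸ (Finset.mem_inter.mpr ⟨hvi, hvA⟩)
          exact (Finset.mem_inter.mp h').2
        · intro hvB
          have h' : v ∈ es.getD 0 ∅ ∩ A := h0.symm ▸ (Finset.mem_inter.mpr ⟨hvi, hvB⟩)
          exact (Finset.mem_inter.mp h').2
      · obtain ⟨v', hv'i, hv'new, j, hji, hsub⟩ := hvo.2 i hipos hil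
        have hjl : j < es.length := lt_trans hji hil
        have hvv' : v = v' := by
          by_contra hne'
          have hmem : v ∈ es.getD i ∅ \ {v'} :=
            Finset.mem_sdiff.mpr ⟨hvi, by simp [hne']⟩
          have hle : Nat.find (hspan v) ≤ j := Nat.find_le ⟨hjl, hsub hmem⟩
          omega
        subst hvv'
        have hei : (es.getD i ∅).card = k := hvo.1 _ (getD_mem' es ∅ hil)
        have hej : (es.getD j ∅).card = k := hvo.1 _ (getD_mem' es ∅ hjl)
        have hsub' : (es.getD i ∅).erase v ⊆ es.getD j ∅ := by
          rw [Finset.erase_eq]; exact hsub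
        have hcer : ((es.getD i ∅).erase v).card = k - 1 := by
          rw [Finset.card_erase_of_mem hvi, hei]
        have hcd : (es.getD j ∅ \ (es.getD i ∅).erase v).card = 1 := by
          rw [Finset.card_sdiff_of_subset hsub', hej, hcer]; omega
        obtain ⟨w, hw⟩ := Finset.card_eq_one.mp hcd
        have hwmem : w ∈ es.getD j ∅ \ (es.getD i ∅).erase v :=
          hw ▸ Finset.mem_singleton_self w
        have hwj : w ∈ es.getD j ∅ := (Finset.mem_sdiff.mp hwmem).1
        have hwne : w ∉ (es.getD i ∅).erase v := (Finset.mem_sdiff.mp hwmem).2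
        have hsub2 : (es.getD i ∅).erase v ⊆ (es.getD j ∅).erase w := fun x hx =>
          Finset.mem_erase.mpr ⟨fun hxw => hwne (hxw ▸ hx), hsub' hx⟩
        have hejw : (es.getD i ∅).erase v = (es.getD j ∅).erase w :=
          Finset.eq_of_subset_of_card_le hsub2
            (by rw [Finset.card_erase_of_mem hwj, hej, hcer])
        have h1A := hA i hil
        have h2A := hA j hjl
        rw [card_inter_erase (es.getD i ∅) A v hvi] at h1A
        rw [card_inter_erase (es.getD j ∅) A w hwj, ← hejw] at h2A
        have hAiff : (v ∈ A ↔ w ∈ A) := iff_of_odd_add h1A h2A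
        have h1B := hB i hil
        have h2B := hB j hjl
        rw [card_inter_erase (es.getD i ∅) B v hvi] at h1B
        rw [card_inter_erase (es.getD j ∅) B w hwj, ← hejw] at h2B
        have hBiff : (v ∈ B ↔ w ∈ B) := iff_of_odd_add h1B h2B
        have hwfind : Nat.find (hspan w) < i :=
          lt_of_le_of_lt (Nat.find_le ⟨hjl, hwj⟩) hji
        have hwiff := ih _ hwfind w rfl
        exact hAiff.trans (hwiff.trans hBiff.symm)
  exact Finset.ext fun v => key (Nat.find (hspan v)) v rfl
/-- For every `k ≥ 2` and every tight `k`-tree `T` on `n ≥ k` vertices there is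
a `k`-graph `H` on `n` vertices not containing `T`, with minimum codegree at least
`⌊n/2⌋ − (2^k + k − 1)`. -/
theorem extremal_example (k : ℕ) (hk : 2 ≤ k) (n : ℕ) (hn : k ≤ n)
    (T : Finset (Finset (Fin n))) (hT : IsTightTree k T) (hTspan : (hverts T).card = n) :
    ∃ H : Finset (Finset (Fin n)),
      (∀ e ∈ H, e.card = k) ∧
      (∀ S : Finset (Fin n), S.card = k - 1 →
        n / 2 - (2 ^ k + k - 1) ≤ (H.filter fun e => S ⊆ e).card) ∧
      ¬ Contains H T := by
  obtain ⟨es, hne, hnodup, hesT, hvo⟩ := hT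
  have hlen0 : 0 < es.length := List.length_pos_iff.mpr hne
  have hmemT : ∀ i, i < es.length → es.getD i ∅ ∈ T := by
    intro i hi
    rw [← hesT]
    exact List.mem_toFinset.mpr (getD_mem' es ∅ hi)
  have huniv : hverts T = Finset.univ := by
    apply Finset.eq_univ_of_card
    rw [hTspan]; simp
  have hspan : ∀ v : Fin n, ∃ i, i < es.length ∧ v ∈ es.getD i ∅ := by
    intro v
    have hv : v ∈ hverts T := huniv ▸ Finset.mem_univ v
    rw [hverts, Finset.mem_sup] at hv
    obtain ⟨e, heT, hve⟩ := hv
    have hees : e ∈ es := List.mem_toFinset.mp (hesT ▸ heT)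
    obtain ⟨i, hi, hgi⟩ := List.mem_iff_getElem.mp hees
    exact ⟨i, hi, by rw [List.getD_eq_getElem es ∅ hi, hgi]; exact hve⟩
  by_cases hsmall : n / 2 ≤ 2 ^ k + k - 1
  · refine ⟨∅, by simp, ?_, ?_⟩
    · intro S hS
      rw [Nat.sub_eq_zero_of_le hsmall]
      exact Nat.zero_le _
    · rintro ⟨φ, hinj, hmap⟩
      exact absurd (hmap _ (hmemT 0 hlen0)) (Finset.notMem_empty _)
  · push_neg at hsmall
    set t := 2 ^ k with ht
    have ht1 : 1 ≤ t := ht ▸ Nat.one_le_two_pow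
    have h2k : t ≤ n / 2 := by omega
    set W : Finset ℕ := Finset.Icc (n / 2 - t) (n / 2) with hW
    have hWcard : W.card = t + 1 := by
      rw [hW, Nat.card_Icc]; omega
    set Bad : Finset ℕ := W.filter (fun m => ∃ A : Finset (Fin n),
      (∀ i, i < es.length → Odd ((es.getD i ∅ ∩ A).card)) ∧ A.card = m) with hBad
    have hBadcard : Bad.card ≤ t := by
      have h1 : Bad.card ≤ ((es.getD 0 ∅).powerset).card := by
        apply Finset.card_le_card_of_injOn (fun m =>
          if h : ∃ A : Finset (Fin n),
              (∀ i, i < es.length → Odd ((es.getD i ∅ ∩ A).card)) ∧ A.card = m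
          then (Classical.choose h) ∩ es.getD 0 ∅ else ∅)
        · intro m hm
          simp only [Finset.mem_coe, Finset.mem_powerset]
          split
          · exact Finset.inter_subset_right
          · exact Finset.empty_subset _
        · intro m1 hm1 m2 hm2 heq
          have h1' := (Finset.mem_filter.mp hm1).2
          have h2' := (Finset.mem_filter.mp hm2).2
          beta_reduce at heq
          rw [dif_pos h1', dif_pos h2'] at heq
          obtain ⟨hA1, hc1⟩ := Classical.choose_spec h1'
          obtain ⟨hA2, hc2⟩ := Classical.choose_spec h2'
          have heq' : Classical.choose h1' = Classical.choose h2' := by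
            apply trace_determines es hvo (by omega) hspan _ _ hA1 hA2
            rw [Finset.inter_comm, heq, Finset.inter_comm]
          rw [← hc1, ← hc2, heq']
      have h2 : ((es.getD 0 ∅).powerset).card = t := by
        rw [Finset.card_powerset, hvo.1 _ (getD_mem' es ∅ hlen0), ← ht]
      omega
    have hlt : Bad.card < W.card := by omega
    have hexa : ∃ a ∈ W, a ∉ Bad := by
      by_contra hc
      push_neg at hc
      exact absurd (Finset.card_le_card hc) (not_le.mpr hlt)
    obtain ⟨a, haW, haBad⟩ := hexa
    have haIcc := Finset.mem_Icc.mp haW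
    have han : a ≤ n := le_trans haIcc.2 (Nat.div_le_self n 2)
    obtain ⟨A, hAsub, hAcard⟩ := Finset.exists_subset_card_eq
      (show a ≤ (Finset.univ : Finset (Fin n)).card by simpa using han)
    refine ⟨(Finset.univ.powersetCard k).filter (fun e => Odd ((e ∩ A).card)), ?_, ?_, ?_⟩
    · intro e he
      exact (Finset.mem_powersetCard.mp (Finset.mem_filter.mp he).1).2
    · intro S hS
      set C : Finset (Fin n) := if Even ((S ∩ A).card) then A \ S else Aᶜ \ S with hC
      have hCnotS : ∀ v ∈ C, v ∉ S := by
        intro v hv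
        rw [hC] at hv
        split at hv
        · exact (Finset.mem_sdiff.mp hv).2
        · exact (Finset.mem_sdiff.mp hv).2
      have hcC : n / 2 - (t + k - 1) ≤ C.card := by
        rw [hC]; split
        · have h1 : A.card - S.card ≤ (A \ S).card := Finset.le_card_sdiff S A
          rw [hAcard, hS] at h1
          omega
        · have h1 : Aᶜ.card - S.card ≤ (Aᶜ \ S).card := Finset.le_card_sdiff S Aᶜ
          rw [Finset.card_compl, hAcard, hS] at h1
          simp only [Fintype.card_fin] at h1
          omega
      refine le_trans hcC (le_trans ?_ le_rfl)
      apply Finset.card_le_card_of_injOn (fun v => insert v S)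
      · intro v hv
        have hvS : v ∉ S := hCnotS v hv
        have hcard : (insert v S).card = k := by
          rw [Finset.card_insert_of_notMem hvS, hS]; omega
        have hparity : Odd ((insert v S ∩ A).card) := by
          rw [card_inter_erase (insert v S) A v (Finset.mem_insert_self v S),
            Finset.erase_insert hvS]
          rw [hC] at hv
          by_cases he : Even ((S ∩ A).card)
          · rw [if_pos he] at hv
            rw [if_pos (Finset.mem_sdiff.mp hv).1]
            exact Even.add_one he
          · rw [if_neg he] at hv
            have hvA : v ∉ A := by
              have := (Finset.mem_sdiff.mp hv).1
              simpa using this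
            rw [if_neg hvA, Nat.add_zero]
            exact Nat.not_even_iff_odd.mp he
        refine Finset.mem_filter.mpr ⟨Finset.mem_filter.mpr ⟨?_, hparity⟩, ?_⟩
        · exact Finset.mem_powersetCard.mpr ⟨Finset.subset_univ _, hcard⟩
        · exact Finset.subset_insert v S
      · intro v1 hv1 v2 hv2 heq
        have heq' : insert v1 S = insert v2 S := heq
        have h' : v1 ∈ insert v2 S := heq' ▸ Finset.mem_insert_self v1 S
        rcases Finset.mem_insert.mp h' with h'' | h''
        · exact h''
        · exact absurd h'' (hCnotS v1 hv1)
    · rintro ⟨φ, hφinj, hφmap⟩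
      set A' : Finset (Fin n) := Finset.univ.filter (fun v => φ v ∈ A) with hA'
      have hcard_eq : ∀ e : Finset (Fin n), (e ∩ A').card = (e.image φ ∩ A).card := by
        intro e
        have himg : (e ∩ A').image φ = e.image φ ∩ A := by
          ext x
          simp only [Finset.mem_image, Finset.mem_inter, hA', Finset.mem_filter,
            Finset.mem_univ, true_and]
          constructor
          · rintro ⟨u, ⟨hue, huA⟩, rfl⟩
            exact ⟨⟨u, hue, rfl⟩, huA⟩
          · rintro ⟨⟨u, hue, rfl⟩, hxA⟩
            exact ⟨u, ⟨hue, hxA⟩, rfl⟩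
        rw [← himg, Finset.card_image_of_injective _ hφinj]
      have hodd : ∀ i, i < es.length → Odd ((es.getD i ∅ ∩ A').card) := by
        intro i hi
        have hH := hφmap _ (hmemT i hi)
        have hOdd := (Finset.mem_filter.mp hH).2
        rw [hcard_eq]
        exact hOdd
      have hsurj : Function.Surjective φ := Finite.injective_iff_surjective.mp hφinj
      have hA'card : A'.card = a := by
        have himg : A'.image φ = A := by
          ext x
          simp only [Finset.mem_image, hA', Finset.mem_filter, Finset.mem_univ, true_and]
          constructor
          · rintro ⟨u, huA, rfl⟩; exact huA
          · intro hx; obtain ⟨u, rfl⟩ := hsurj x; exact ⟨u, hx, rfl⟩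
        rw [← hAcard, ← himg, Finset.card_image_of_injective _ hφinj]
      exact haBad (Finset.mem_filter.mpr ⟨haW, ⟨A', hodd, hA'card⟩⟩)
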